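/- Let Z be a standard normal random variable and let σ > 0 and μ ∈ ℝ. Then lim_{h→0⁺} (1/√h) · E[ |exp(σ·√h·Z + (μ − σ²/2)·h) − 1| ] = σ·√(2/π). In other words, the expected absolute relative move of a geometric Brownian motion with volatility σ and drift μ over a time interval of length h is asymptotically σ·√(2h/π) as h → 0. -/

import Mathlib

open MeasureTheory ProbabilityTheory Filter Real Set Topology NNReal ENNReal

lemma abs_exp_sub_one_le_aux (x : ℝ) : |Real.exp x - 1| ≤ |x| * Real.exp |x| := by
  rcases le_or_gt 0 x with hx | hx
  · rw [abs_of_nonneg hx,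
      abs_of_nonneg (by linarith [Real.one_le_exp hx] : (0:ℝ) ≤ Real.exp x - 1)]
    have h1 := Real.add_one_le_exp (-x)
    have h2 := Real.exp_pos x
    have h3 : Real.exp (-x) * Real.exp x = 1 := by rw [← Real.exp_add]; simp
    nlinarith
  · rw [abs_of_neg hx,
      abs_of_nonpos (by linarith [Real.exp_lt_one_iff.mpr hx] : Real.exp x - 1 ≤ 0)]
    have h1 := Real.add_one_le_exp x
    have h2 := Real.one_le_exp (by linarith : (0:ℝ) ≤ -x)
    nlinarith

lemma integral_Ioi_mul_exp_half : ∫ x in Set.Ioi (0:ℝ), x * Real.exp (-x^2/2) = 1 := by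
  have hderiv : ∀ x ∈ Set.Ici (0:ℝ),
      HasDerivAt (fun y => -Real.exp (-y^2/2)) (x * Real.exp (-x^2/2)) x := by
    intro x _
    have h1 : HasDerivAt (fun y : ℝ => -y^2/2) (-(2*x^1)/2) x :=
      ((hasDerivAt_pow 2 x).neg.div_const 2)
    have h2 := (h1.exp).neg
    exact h2.congr_deriv (by ring)
  have hint : IntegrableOn (fun x => x * Real.exp (-x^2/2)) (Set.Ioi 0) := by
    have := integrable_mul_exp_neg_mul_sq (b := (1:ℝ)/2) (by norm_num)
    have h : (fun x : ℝ => x * Real.exp (-x^2/2)) = fun x => x * Real.exp (-(1/2) * x^2) := by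
      funext x; ring_nf
    rw [h]
    exact this.integrableOn
  have htend : Tendsto (fun y : ℝ => -Real.exp (-y^2/2)) atTop (𝓝 0) := by
    have h1 : Tendsto (fun y : ℝ => -y^2/2) atTop atBot := by
      have := (tendsto_pow_atTop (two_ne_zero)).atTop_div_const (by norm_num : (0:ℝ) < 2)
      exact (tendsto_neg_atBot_iff.mpr this).congr (fun y => by ring)
    have := (Real.tendsto_exp_atBot.comp h1).neg
    simpa using this
  have := integral_Ioi_of_hasDerivAt_of_tendsto' hderiv hint htend
  simp at this
  rw [this]

lemma integral_gaussian_fun (g : ℝ → ℝ) :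
    ∫ z, g z ∂(gaussianReal 0 1)
      = ∫ z, gaussianPDFReal 0 1 z * g z := by
  rw [gaussianReal_of_var_ne_zero 0 one_ne_zero, gaussianPDF_def]
  have h : (fun x => ENNReal.ofReal (gaussianPDFReal 0 1 x))
      = fun x => ((gaussianPDFReal 0 1 x).toNNReal : ℝ≥0∞) := rfl
  rw [h, integral_withDensity_eq_integral_smul
    (measurable_gaussianPDFReal 0 1).real_toNNReal g]
  congr 1
  funext z
  simp [NNReal.smul_def, Real.coe_toNNReal _ (gaussianPDFReal_nonneg 0 1 z)]

lemma integral_abs_gaussian : ∫ z, |z| ∂(gaussianReal 0 1) = Real.sqrt (2 / Real.pi) := by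
  rw [integral_gaussian_fun]
  have h : (fun z : ℝ => gaussianPDFReal 0 1 z * |z|)
      = fun z => (Real.sqrt (2 * Real.pi))⁻¹ * (|z| * Real.exp (-z^2/2)) := by
    funext z
    rw [gaussianPDFReal]
    push_cast
    ring_nf
  rw [h, integral_const_mul]
  have h2 : (∫ z : ℝ, |z| * Real.exp (-z^2/2)) = 2 := by
    have h3 : (fun z : ℝ => |z| * Real.exp (-z^2/2))
        = fun z => |z| * Real.exp (-|z|^2/2) := by
      funext z; rw [sq_abs]
    rw [h3, integral_comp_abs (f := fun x => x * Real.exp (-x^2/2)),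
      integral_Ioi_mul_exp_half]
    norm_num
  rw [h2]
  have hpos : (0:ℝ) < Real.sqrt (2 * Real.pi) := Real.sqrt_pos.mpr (by positivity)
  rw [show Real.sqrt (2/Real.pi) = 2 / Real.sqrt (2 * Real.pi) by
    rw [eq_div_iff hpos.ne', ← Real.sqrt_mul (by positivity),
      show (2/Real.pi)*(2*Real.pi) = 2^2 by field_simp, Real.sqrt_sq (by norm_num)]]
  ring

lemma pointwise_lim (σ c z : ℝ) (hσ : 0 < σ) :
    Tendsto (fun h : ℝ => (1 / Real.sqrt h) * |Real.exp (σ * Real.sqrt h * z + c * h) - 1|)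
      (𝓝[>] (0:ℝ)) (𝓝 (σ * |z|)) := by
  have hf : HasDerivAt (fun t : ℝ => Real.exp (σ * t * z + c * t^2)) (σ * z) 0 := by
    have ha : HasDerivAt (fun t : ℝ => σ * t * z) (σ * z) 0 := by
      simpa using ((hasDerivAt_id (0:ℝ)).const_mul σ).mul_const z
    have hb : HasDerivAt (fun t : ℝ => c * t^2) 0 0 := by
      simpa using (hasDerivAt_pow 2 (0:ℝ)).const_mul c
    have h1 : HasDerivAt (fun t : ℝ => σ * t * z + c * t^2) (σ * z) 0 := by
      exact (ha.add hb).congr_deriv (add_zero _)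
    simpa using h1.exp
  have hslope := hasDerivAt_iff_tendsto_slope.mp hf
  have habs : Tendsto
      (fun t : ℝ => |slope (fun t : ℝ => Real.exp (σ * t * z + c * t^2)) 0 t|)
      (𝓝[≠] (0:ℝ)) (𝓝 (σ * |z|)) := by
    have := hslope.abs
    rwa [abs_mul, abs_of_pos hσ] at this
  have habs' := habs.mono_left
    (nhdsWithin_mono 0 (fun x hx => ne_of_gt hx : Set.Ioi (0:ℝ) ⊆ {0}ᶜ))
  have hG : Tendsto (fun t : ℝ => (1/t) * |Real.exp (σ * t * z + c * t^2) - 1|)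
      (𝓝[>] (0:ℝ)) (𝓝 (σ * |z|)) := by
    apply habs'.congr'
    filter_upwards [eventually_mem_nhdsWithin] with t ht
    rw [slope_def_field]
    simp only [sub_zero, Real.exp_zero]
    rw [abs_div, abs_of_pos (show (0:ℝ) < t from ht)]
    have : σ * 0 * z + c * 0^2 = 0 := by ring
    rw [this, Real.exp_zero]
    ring
  have hs : Tendsto Real.sqrt (𝓝[>] (0:ℝ)) (𝓝[>] (0:ℝ)) := by
    rw [tendsto_nhdsWithin_iff]
    constructor
    · have : Tendsto Real.sqrt (𝓝 0) (𝓝 (Real.sqrt 0)) :=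
        Real.continuous_sqrt.continuousAt
      simpa using this.mono_left nhdsWithin_le_nhds
    · filter_upwards [eventually_mem_nhdsWithin] with h hh
      exact Real.sqrt_pos.mpr hh
  have hcomp := hG.comp hs
  apply hcomp.congr'
  filter_upwards [eventually_mem_nhdsWithin] with h hh
  simp only [Function.comp_apply]
  rw [Real.sq_sqrt (le_of_lt hh)]

lemma integrable_bound_gaussian (σ C : ℝ) (hσ : 0 < σ) (hC : 0 ≤ C) :
    Integrable (fun z : ℝ => (σ * |z| + C) * Real.exp (σ * |z| + C)) (gaussianReal 0 1) := by
  rw [gaussianReal_of_var_ne_zero 0 one_ne_zero, gaussianPDF_def]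
  rw [integrable_withDensity_iff ((measurable_gaussianPDFReal 0 1).ennreal_ofReal)
    (Eventually.of_forall fun x => ENNReal.ofReal_lt_top)]
  have heq : (fun z : ℝ => ((σ * |z| + C) * Real.exp (σ * |z| + C)) *
        (ENNReal.ofReal (gaussianPDFReal 0 1 z)).toReal)
      = fun z => ((σ * |z| + C) * Real.exp (σ * |z| + C)) * gaussianPDFReal 0 1 z := by
    funext z; rw [ENNReal.toReal_ofReal (gaussianPDFReal_nonneg 0 1 z)]
  rw [heq]
  set c0 : ℝ := (Real.sqrt (2*Real.pi))⁻¹ with hc0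
  have hc0pos : 0 < c0 := by
    rw [hc0]; positivity
  set K : ℝ := (σ + C) * Real.exp C * c0 * Real.exp ((σ+1)^2) with hK
  apply Integrable.mono' (g := fun z => K * Real.exp (-(1/4) * z^2))
  · exact (integrable_exp_neg_mul_sq (by norm_num : (0:ℝ) < 1/4)).const_mul K
  · apply Continuous.aestronglyMeasurable
    simp only [gaussianPDFReal_def]
    fun_prop
  · filter_upwards with z
    have hpdf : gaussianPDFReal 0 1 z = c0 * Real.exp (-z^2/2) := by
      simp [gaussianPDFReal, hc0]
    have hA : 0 ≤ σ * |z| + C := by positivity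
    have hpdfnn : 0 ≤ gaussianPDFReal 0 1 z := gaussianPDFReal_nonneg 0 1 z
    rw [Real.norm_eq_abs, abs_of_nonneg (by positivity), hpdf]
    have h1 : σ * |z| + C ≤ (σ + C) * Real.exp |z| := by
      nlinarith [Real.add_one_le_exp |z|, abs_nonneg z, hσ.le]
    have h3 : Real.exp (|z| + (σ * |z| + C) + -z^2/2)
        ≤ Real.exp ((σ+1)^2) * Real.exp (C + -(1/4)*z^2) := by
      rw [← Real.exp_add]
      apply Real.exp_le_exp.mpr
      nlinarith [sq_nonneg (σ + 1 - |z|/2), sq_abs z]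
    calc (σ * |z| + C) * Real.exp (σ * |z| + C) * (c0 * Real.exp (-z^2/2))
        ≤ ((σ + C) * Real.exp |z|) * Real.exp (σ * |z| + C) * (c0 * Real.exp (-z^2/2)) := by
          apply mul_le_mul_of_nonneg_right (mul_le_mul_of_nonneg_right h1 (Real.exp_pos _).le)
          positivity
      _ = (σ + C) * c0 * Real.exp (|z| + (σ * |z| + C) + -z^2/2) := by
          simp only [Real.exp_add]; ring
      _ ≤ (σ + C) * c0 * (Real.exp ((σ+1)^2) * Real.exp (C + -(1/4)*z^2)) := by
          apply mul_le_mul_of_nonneg_left h3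
          positivity
      _ = K * Real.exp (-(1/4) * z^2) := by
          rw [hK]; simp only [Real.exp_add]; ring

/-- The expected absolute relative move of a geometric Brownian motion with volatility `σ` and
drift `μ` over a time interval of length `h` is asymptotically `σ √(2h/π)` as `h → 0⁺`:
`(1/√h) E[|exp(σ √h Z + (μ - σ²/2) h) - 1|] → σ √(2/π)`, where `Z` is standard normal. -/
theorem expected_abs_gbm_move_asymptotic (σ μ : ℝ) (hσ : 0 < σ) :
    Tendsto
      (fun h : ℝ => (1 / Real.sqrt h) *
        ∫ z : ℝ, |Real.exp (σ * Real.sqrt h * z + (μ - σ ^ 2 / 2) * h) - 1|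
          ∂(gaussianReal 0 1))
      (nhdsWithin 0 (Set.Ioi 0)) (nhds (σ * Real.sqrt (2 / Real.pi))) := by
  set c : ℝ := μ - σ ^ 2 / 2 with hc
  set C : ℝ := |c| with hCdef
  have hC : 0 ≤ C := abs_nonneg c
  have hrw : ∀ h : ℝ, (1 / Real.sqrt h) *
      ∫ z : ℝ, |Real.exp (σ * Real.sqrt h * z + c * h) - 1| ∂(gaussianReal 0 1)
      = ∫ z : ℝ, (1 / Real.sqrt h) * |Real.exp (σ * Real.sqrt h * z + c * h) - 1|
          ∂(gaussianReal 0 1) :=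
    fun h => (integral_const_mul _ _).symm
  simp only [hrw]
  have hlim : σ * Real.sqrt (2/Real.pi) = ∫ z, σ * |z| ∂(gaussianReal 0 1) := by
    rw [integral_const_mul, integral_abs_gaussian]
  rw [hlim]
  apply tendsto_integral_filter_of_dominated_convergence
    (bound := fun z => (σ * |z| + C) * Real.exp (σ * |z| + C))
  · filter_upwards with h
    apply Continuous.aestronglyMeasurable
    fun_prop
  · filter_upwards [Ioc_mem_nhdsGT (zero_lt_one : (0:ℝ) < 1)] with h hh
    filter_upwards with z
    obtain ⟨h0, h1⟩ := hh
    have hs : 0 < Real.sqrt h := Real.sqrt_pos.mpr h0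
    have hs1 : Real.sqrt h ≤ 1 := by
      rw [show (1:ℝ) = Real.sqrt 1 by simp]
      exact Real.sqrt_le_sqrt h1
    have hmul : Real.sqrt h * Real.sqrt h = h := Real.mul_self_sqrt h0.le
    set u := σ * Real.sqrt h * z + c * h with hu
    have hu1 : |u| ≤ σ * |z| + C := by
      calc |u| ≤ |σ * Real.sqrt h * z| + |c * h| := abs_add_le _ _
        _ = σ * Real.sqrt h * |z| + C * h := by
            rw [abs_mul, abs_mul, abs_mul, abs_of_pos hσ, abs_of_pos hs, abs_of_pos h0]
        _ ≤ σ * |z| + C := by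
            nlinarith [mul_le_mul_of_nonneg_left hs1 (mul_nonneg hσ.le (abs_nonneg z)),
              mul_le_mul_of_nonneg_left h1 hC]
    have hu2 : |u| ≤ Real.sqrt h * (σ * |z| + C) := by
      calc |u| ≤ |σ * Real.sqrt h * z| + |c * h| := abs_add_le _ _
        _ = σ * Real.sqrt h * |z| + C * h := by
            rw [abs_mul, abs_mul, abs_mul, abs_of_pos hσ, abs_of_pos hs, abs_of_pos h0]
        _ ≤ Real.sqrt h * (σ * |z|) + Real.sqrt h * C := by
            have hh : h ≤ Real.sqrt h := by nlinarith
            nlinarith [mul_le_mul_of_nonneg_left hh hC]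
        _ = Real.sqrt h * (σ * |z| + C) := by ring
    rw [Real.norm_eq_abs, abs_of_nonneg (by positivity)]
    calc (1/Real.sqrt h) * |Real.exp u - 1|
        ≤ (1/Real.sqrt h) * (|u| * Real.exp |u|) := by
          apply mul_le_mul_of_nonneg_left (abs_exp_sub_one_le_aux u) (by positivity)
      _ ≤ (1/Real.sqrt h) * ((Real.sqrt h * (σ*|z|+C)) * Real.exp (σ*|z|+C)) := by
          apply mul_le_mul_of_nonneg_left _ (by positivity)
          exact mul_le_mul hu2 (Real.exp_le_exp.mpr hu1) (Real.exp_pos _).le (by positivity)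
      _ = (σ*|z|+C) * Real.exp (σ*|z|+C) := by
          field_simp
  · exact integrable_bound_gaussian σ C hσ hC
  · filter_upwards with z using pointwise_lim σ c z hσ
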